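/- Let 0 < α < 2 and let j ≥ 1 be an integer. Then there exists a constant C_j < ∞ such that for all λ > 0 and all u > 0, |∫₀^∞ cos(us) s^{j−α} e^{−λs} ds| ≤ C_j (1+λ)^j u^{α−1−j} and |∫₀^∞ sin(us) s^{j−α} e^{−λs} ds| ≤ C_j (1+λ)^j u^{α−1−j}. -/

import Mathlib

open MeasureTheory Real Set Filter Topology

lemma aux_meas (c : ℂ) (z : ℂ) :
    AEStronglyMeasurable (fun s : ℝ => (s:ℂ) ^ c * Complex.exp (-(z * s)))
      (volume.restrict (Ioi 0)) := by
  apply ContinuousOn.aestronglyMeasurable _ measurableSet_Ioi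
  apply ContinuousOn.mul
  · intro s hs
    exact (Complex.continuousAt_ofReal_cpow_const s c (Or.inr (ne_of_gt hs))).continuousWithinAt
  · exact (Complex.continuous_exp.comp
      ((continuous_const.mul Complex.continuous_ofReal).neg)).continuousOn

lemma aux_norm {w : ℝ} {s : ℝ} (hs : 0 < s) (z : ℂ) :
    ‖(s:ℂ) ^ ((w:ℂ) - 1) * Complex.exp (-(z * s))‖
      = s ^ (w - 1) * Real.exp (-(z.re * s)) := by
  rw [norm_mul,
    Complex.norm_cpow_eq_rpow_re_of_pos hs, Complex.norm_exp]
  simp [Complex.mul_re]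

lemma aux_real_intble (w b : ℝ) (hw : -1 < w) (hb : 0 < b) :
    IntegrableOn (fun s : ℝ => s ^ w * Real.exp (-(b * s))) (Ioi 0) := by
  have := integrableOn_rpow_mul_exp_neg_mul_rpow (p := 1) hw one_pos hb
  simpa [neg_mul] using this

lemma aux_intble (w : ℝ) (hw : 0 < w) {z : ℂ} (hz : 0 < z.re) :
    IntegrableOn (fun s : ℝ => (s:ℂ) ^ ((w:ℂ) - 1) * Complex.exp (-(z * s))) (Ioi 0) := by
  refine ((aux_real_intble (w-1) z.re (by linarith) hz).mono' (aux_meas _ _) ?_)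
  filter_upwards [ae_restrict_mem measurableSet_Ioi] with s hs
  rw [aux_norm hs]

lemma aux_deriv (w : ℝ) (hw : 0 < w) :
    DifferentiableOn ℂ
      (fun z => ∫ s in Ioi (0:ℝ), (s:ℂ) ^ ((w:ℂ) - 1) * Complex.exp (-(z * s)))
      {z : ℂ | 0 < z.re} := by
  intro z₀ hz₀
  have hz₀' : 0 < z₀.re := hz₀
  set ε : ℝ := z₀.re / 2 with hεdef
  have hε0 : 0 < ε := half_pos hz₀'
  have key := hasDerivAt_integral_of_dominated_loc_of_deriv_le
    (μ := volume.restrict (Ioi 0)) (𝕜 := ℂ)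
    (F := fun z (s : ℝ) => (s:ℂ) ^ ((w:ℂ) - 1) * Complex.exp (-(z * s)))
    (F' := fun z (s : ℝ) => ((s:ℂ) ^ ((w:ℂ) - 1) * Complex.exp (-(z * s))) * (-(s:ℂ)))
    (x₀ := z₀) (bound := fun s : ℝ => s ^ w * Real.exp (-(ε * s))) (Metric.ball_mem_nhds z₀ hε0)
    (Eventually.of_forall fun z => aux_meas _ _)
    (aux_intble w hw hz₀')
    ((aux_meas _ _).mul (Complex.continuous_ofReal.neg.aestronglyMeasurable))
    ?_ (aux_real_intble w ε (by linarith) hε0) ?_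
  · exact key.2.differentiableAt.differentiableWithinAt
  · filter_upwards [ae_restrict_mem measurableSet_Ioi] with s hs z hz
    have hre : ε ≤ z.re := by
      have h1 : |z.re - z₀.re| ≤ ‖z - z₀‖ := by
        simpa using Complex.abs_re_le_norm (z - z₀)
      have h2 : ‖z - z₀‖ < ε := by
        simpa [Metric.mem_ball, Complex.dist_eq] using hz
      have := abs_sub_lt_iff.mp (lt_of_le_of_lt h1 h2)
      simp only [hεdef] at *
      linarith [this.2]
    rw [norm_mul, aux_norm hs]
    have hnorm : ‖(-(s:ℂ))‖ = s := by
      rw [norm_neg, Complex.norm_real, Real.norm_eq_abs, abs_of_pos hs]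
    rw [hnorm]
    have h1 : s ^ (w - 1) * Real.exp (-(z.re * s)) * s = s ^ w * Real.exp (-(z.re * s)) := by
      rw [mul_right_comm, ← Real.rpow_add_one (ne_of_gt hs) (w-1)]
      ring_nf
    rw [h1]
    have hs0 : (0:ℝ) < s := hs
    refine mul_le_mul_of_nonneg_left (Real.exp_le_exp.mpr ?_) (Real.rpow_nonneg hs0.le w)
    nlinarith
  · refine Eventually.of_forall fun s => fun z _ => ?_
    have h1 : HasDerivAt (fun z : ℂ => -(z * (s:ℂ))) (-(s:ℂ)) z := by
      exact ((hasDerivAt_id z).mul_const ((s:ℂ))).neg.congr_deriv (by simp)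
    have h2 := h1.cexp
    have h3 := h2.const_mul ((s:ℂ) ^ ((w:ℂ) - 1))
    simpa [mul_assoc] using h3

lemma aux_gamma (w : ℝ) (hw : 0 < w) {z : ℂ} (hz : 0 < z.re) :
    ∫ s in Ioi (0:ℝ), (s:ℂ) ^ ((w:ℂ) - 1) * Complex.exp (-(z * s))
      = Complex.Gamma w * z ^ (-(w:ℂ)) := by
  set U : Set ℂ := {z : ℂ | 0 < z.re} with hUdef
  have hU : IsOpen U := isOpen_lt continuous_const Complex.continuous_re
  set F : ℂ → ℂ := fun z => ∫ s in Ioi (0:ℝ), (s:ℂ) ^ ((w:ℂ) - 1) * Complex.exp (-(z * s))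
    with hFdef
  set G : ℂ → ℂ := fun z => Complex.Gamma w * z ^ (-(w:ℂ)) with hGdef
  have hFa : AnalyticOnNhd ℂ F U := (aux_deriv w hw).analyticOnNhd hU
  have hGa : AnalyticOnNhd ℂ G U := by
    refine DifferentiableOn.analyticOnNhd (fun z hz => ?_) hU
    exact ((differentiableAt_id.cpow (differentiableAt_const _)
      (Or.inl hz)).const_mul _).differentiableWithinAt
  have hre : ∀ r : ℝ, 0 < r → F r = G r := by
    intro r hr
    have h := Complex.integral_cpow_mul_exp_neg_mul_Ioi
      (a := (w:ℂ)) (r := r) (by simpa using hw) hr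
    have harg : ((r:ℂ)).arg ≠ Real.pi := by
      rw [Complex.arg_ofReal_of_nonneg hr.le]
      exact fun h => Real.pi_ne_zero h.symm
    have h2 : ((1:ℂ)/r) ^ (w:ℂ) = (r:ℂ) ^ (-(w:ℂ)) := by
      rw [one_div, Complex.inv_cpow _ _ harg, ← Complex.cpow_neg]
    rw [hFdef, hGdef]
    simp only
    rw [h, h2, mul_comm]
  have hmem : (1:ℂ) ∈ U := by simp [hUdef]
  have t1 : Tendsto (fun n : ℕ => 1 + ((n:ℝ)+1)⁻¹) atTop (𝓝 1) := by
    have := tendsto_one_div_add_atTop_nhds_zero_nat (𝕜 := ℝ)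
    simp only [one_div] at this
    simpa using tendsto_const_nhds.add this
  have t2 : Tendsto (fun n : ℕ => ((1 + ((n:ℝ)+1)⁻¹ : ℝ) : ℂ)) atTop (𝓝 (1:ℂ)) := by
    have := (Complex.continuous_ofReal.tendsto (1:ℝ)).comp t1
    simpa [Function.comp_def] using this
  have t3 : Tendsto (fun n : ℕ => ((1 + ((n:ℝ)+1)⁻¹ : ℝ) : ℂ)) atTop (𝓝[≠] (1:ℂ)) := by
    refine tendsto_nhdsWithin_of_tendsto_nhds_of_eventually_within _ t2
      (Eventually.of_forall fun n => ?_)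
    simp only [Set.mem_compl_iff, Set.mem_singleton_iff]
    intro h
    have : (1 + ((n:ℝ)+1)⁻¹ : ℝ) = 1 := by exact_mod_cast h
    have hpos : (0:ℝ) < ((n:ℝ)+1)⁻¹ := by positivity
    linarith
  have freq : ∃ᶠ z in 𝓝[≠] (1:ℂ), F z = G z :=
    t3.frequently (Frequently.of_forall fun n => hre _ (by positivity))
  exact hFa.eqOn_of_preconnected_of_frequently_eq hGa
    (convex_halfSpace_re_gt 0).isPreconnected hmem freq hz

theorem smalltime_AuxEst1b (α : ℝ) (h0 : 0 < α) (h2 : α < 2) (j : ℕ) (hj : 1 ≤ j) :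
    ∃ C : ℝ, ∀ lam u : ℝ, 0 < lam → 0 < u →
      |∫ s in Ioi (0:ℝ), Real.cos (u * s) * s ^ ((j : ℝ) - α) * Real.exp (-(lam * s))| ≤
        C * (1 + lam) ^ j * u ^ (α - 1 - j) ∧
      |∫ s in Ioi (0:ℝ), Real.sin (u * s) * s ^ ((j : ℝ) - α) * Real.exp (-(lam * s))| ≤
        C * (1 + lam) ^ j * u ^ (α - 1 - j) := by
  have hj1 : (1:ℝ) ≤ (j:ℝ) := by exact_mod_cast hj
  set w : ℝ := (j:ℝ) + 1 - α with hwdef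
  have hw : 0 < w := by rw [hwdef]; linarith
  refine ⟨Real.Gamma w, fun lam u hlam hu => ?_⟩
  set z : ℂ := (lam:ℂ) - (u:ℂ) * Complex.I with hzdef
  have hzre : z.re = lam := by simp [hzdef]
  have hzim : z.im = -u := by simp [hzdef]
  have hz : 0 < z.re := by rw [hzre]; exact hlam
  have hzne : z ≠ 0 := by
    intro h
    rw [h] at hzre
    simp at hzre
    linarith
  have hInt : IntegrableOn (fun s : ℝ => (s:ℂ) ^ ((w:ℂ) - 1) * Complex.exp (-(z * s)))
      (Ioi 0) := aux_intble w hw hz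
  have hG := aux_gamma w hw hz
  have hexp : (j:ℝ) - α = w - 1 := by rw [hwdef]; ring
  have hpt : ∀ s ∈ Ioi (0:ℝ),
      ((s:ℂ) ^ ((w:ℂ)-1) * Complex.exp (-(z * s))).re
        = Real.cos (u*s) * s ^ ((j:ℝ) - α) * Real.exp (-(lam*s))
    ∧ ((s:ℂ) ^ ((w:ℂ)-1) * Complex.exp (-(z * s))).im
        = Real.sin (u*s) * s ^ ((j:ℝ) - α) * Real.exp (-(lam*s)) := by
    intro s hs
    have hs0 : (0:ℝ) < s := hs
    have hcp : (s:ℂ) ^ ((w:ℂ)-1) = ((s ^ (w-1) : ℝ) : ℂ) := by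
      rw [Complex.ofReal_cpow hs0.le]
      push_cast
      ring_nf
    have hB : -(z * (s:ℂ)) = ((-(lam*s) : ℝ) : ℂ) + ((u*s : ℝ):ℂ) * Complex.I := by
      rw [hzdef]; push_cast; ring
    rw [hcp, hB, hexp]
    constructor
    · simp only [Complex.exp_re, Complex.exp_im, Complex.add_re, Complex.add_im,
        Complex.mul_re, Complex.mul_im, Complex.ofReal_re, Complex.ofReal_im,
        Complex.I_re, Complex.I_im]
      ring
    · simp only [Complex.exp_re, Complex.exp_im, Complex.add_re, Complex.add_im,
        Complex.mul_re, Complex.mul_im, Complex.ofReal_re, Complex.ofReal_im,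
        Complex.I_re, Complex.I_im]
      ring
  have hIre : ∫ s in Ioi (0:ℝ), Real.cos (u * s) * s ^ ((j : ℝ) - α) * Real.exp (-(lam * s))
      = (∫ s in Ioi (0:ℝ), (s:ℂ) ^ ((w:ℂ)-1) * Complex.exp (-(z * s))).re := by
    have h := integral_re (μ := volume.restrict (Ioi 0)) hInt
    simp only [RCLike.re_to_complex] at h
    rw [← h]
    refine setIntegral_congr_fun measurableSet_Ioi (fun s hs => ?_)
    simpa using ((hpt s hs).1).symm
  have hIim : ∫ s in Ioi (0:ℝ), Real.sin (u * s) * s ^ ((j : ℝ) - α) * Real.exp (-(lam * s))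
      = (∫ s in Ioi (0:ℝ), (s:ℂ) ^ ((w:ℂ)-1) * Complex.exp (-(z * s))).im := by
    have h := integral_im (μ := volume.restrict (Ioi 0)) hInt
    simp only [RCLike.im_to_complex] at h
    rw [← h]
    refine setIntegral_congr_fun measurableSet_Ioi (fun s hs => ?_)
    simpa using ((hpt s hs).2).symm
  have habs : ‖(∫ s in Ioi (0:ℝ), (s:ℂ) ^ ((w:ℂ)-1) * Complex.exp (-(z * s)))‖
      ≤ Real.Gamma w * u ^ (α - 1 - (j:ℝ)) := by
    rw [hG, norm_mul, Complex.Gamma_ofReal, Complex.norm_real, Real.norm_eq_abs,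
      abs_of_pos (Real.Gamma_pos_of_pos hw), Complex.norm_cpow_of_ne_zero hzne]
    simp only [Complex.neg_re, Complex.ofReal_re, Complex.neg_im, Complex.ofReal_im,
      neg_zero, mul_zero, Real.exp_zero, div_one]
    have h1 : u ≤ ‖z‖ := by
      have h := Complex.abs_im_le_norm z
      rw [hzim, abs_neg, abs_of_pos hu] at h
      exact h
    have h2 : ‖z‖ ^ (-w) ≤ u ^ (-w) :=
      Real.rpow_le_rpow_of_nonpos hu h1 (by linarith)
    have h3 : -w = α - 1 - (j:ℝ) := by rw [hwdef]; ring
    rw [← h3]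
    exact mul_le_mul_of_nonneg_left h2 (Real.Gamma_pos_of_pos hw).le
  have hfin : Real.Gamma w * u ^ (α - 1 - (j:ℝ))
      ≤ Real.Gamma w * (1 + lam) ^ j * u ^ (α - 1 - (j:ℝ)) := by
    have h1 : (1:ℝ) ≤ (1 + lam) ^ j := one_le_pow₀ (by linarith)
    have h2 : (0:ℝ) ≤ u ^ (α - 1 - (j:ℝ)) := Real.rpow_nonneg hu.le _
    exact mul_le_mul_of_nonneg_right
      (le_mul_of_one_le_right (Real.Gamma_pos_of_pos hw).le h1) h2
  constructor
  · rw [hIre]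
    calc |(∫ s in Ioi (0:ℝ), (s:ℂ) ^ ((w:ℂ)-1) * Complex.exp (-(z * s))).re|
        ≤ ‖(∫ s in Ioi (0:ℝ), (s:ℂ) ^ ((w:ℂ)-1) * Complex.exp (-(z * s)))‖ :=
          Complex.abs_re_le_norm _
      _ ≤ Real.Gamma w * u ^ (α - 1 - (j:ℝ)) := habs
      _ ≤ _ := hfin
  · rw [hIim]
    calc |(∫ s in Ioi (0:ℝ), (s:ℂ) ^ ((w:ℂ)-1) * Complex.exp (-(z * s))).im|
        ≤ ‖(∫ s in Ioi (0:ℝ), (s:ℂ) ^ ((w:ℂ)-1) * Complex.exp (-(z * s)))‖ :=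
          Complex.abs_im_le_norm _
      _ ≤ Real.Gamma w * u ^ (α - 1 - (j:ℝ)) := habs
      _ ≤ _ := hfin
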